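/- Let p = (p_1, ..., p_n) be a nondecreasing tuple of nonnegative integers and define LP(p) as the number of nondecreasing tuples q ∈ ℕ^n with q ≤ p componentwise. Then for each 0 ≤ j ≤ n: sum over i from 1 to j+1 of (-1)^{j-i+1} * binomial(p_i + 1, j - i + 1) * LP((p_1, ..., p_{i-1})) equals 1 if j = 0 and 0 if j ≥ 1, where LP of the empty tuple is 1. -/

import Mathlib

/-- `prefLP n p k` is `LP((p_1, ..., p_k))`: the number of nondecreasing tuples
`q ∈ ℕ^k` with `q_i ≤ p_i` for each `i ≤ k`.  (For `k ≤ n`, the constraint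
`∀ h : (i : ℕ) < n, ...` always applies, so this is exactly the number of
nondecreasing tuples bounded by the length-`k` prefix of `p`; in particular
`prefLP n p 0 = 1`.) -/
noncomputable def prefLP (n : ℕ) (p : Fin n → ℕ) (k : ℕ) : ℕ :=
  Nat.card {q : Fin k → ℕ //
    Monotone q ∧ ∀ i : Fin k, ∀ h : (i : ℕ) < n, q i ≤ p ⟨i, h⟩}

namespace LP19

variable {n : ℕ}

lemma prefLP_eq (p : Fin n → ℕ) {k : ℕ} (hk : k ≤ n) :
    prefLP n p k = ((Fintype.piFinset fun m : Fin k => Finset.Iic (p ⟨m, m.2.trans_le hk⟩)).filter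
      fun q => ∀ a b : Fin k, a ≤ b → q a ≤ q b).card := by
  rw [← Nat.card_eq_finsetCard, prefLP]
  refine Nat.card_congr (Equiv.subtypeEquivRight fun q => ?_)
  simp only [Finset.mem_coe, Finset.mem_filter, Fintype.mem_piFinset, Finset.mem_Iic]
  constructor
  · rintro ⟨hm, hb⟩
    exact ⟨fun m => hb m (m.2.trans_le hk), fun a b hab => hm hab⟩
  · rintro ⟨hb, hm⟩
    exact ⟨fun a b hab => hm a b hab, fun m h => hb m⟩

lemma prefLP_zero (p : Fin n → ℕ) : prefLP n p 0 = 1 := by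
  rw [prefLP]
  have h : ∀ q : Fin 0 → ℕ, Monotone q ∧ ∀ i : Fin 0, ∀ h : (i : ℕ) < n, q i ≤ p ⟨i, h⟩ :=
    fun q => ⟨fun a => a.elim0, fun i => i.elim0⟩
  rw [Nat.card_congr (Equiv.subtypeUnivEquiv h)]
  exact Nat.card_unique

def Fil (p : Fin n → ℕ) (j : ℕ) (hj : j ≤ n) (s : ℕ) : Finset (Fin j → ℕ) :=
  (Fintype.piFinset fun m : Fin j => Finset.Iic (p ⟨m, m.2.trans_le hj⟩)).filter fun u =>
    (∀ a b : Fin j, (a : ℕ) ≤ b → (b : ℕ) < s → u a ≤ u b) ∧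
    (∀ a b : Fin j, s ≤ (a : ℕ) → (a : ℕ) < b → u b < u a)

lemma mem_Fil {p : Fin n → ℕ} {j s : ℕ} {hj : j ≤ n} {u : Fin j → ℕ} :
    u ∈ Fil p j hj s ↔ (∀ m : Fin j, u m ≤ p ⟨m, m.2.trans_le hj⟩) ∧
      (∀ a b : Fin j, (a : ℕ) ≤ b → (b : ℕ) < s → u a ≤ u b) ∧
      (∀ a b : Fin j, s ≤ (a : ℕ) → (a : ℕ) < b → u b < u a) := by
  simp [Fil, Fintype.mem_piFinset, and_assoc]

lemma card_Fil_top (p : Fin n → ℕ) {j : ℕ} (hj : j ≤ n) :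
    (Fil p j hj j).card = prefLP n p j := by
  rw [prefLP_eq p hj]
  congr 1
  ext u
  rw [mem_Fil, Finset.mem_filter, Fintype.mem_piFinset]
  constructor
  · rintro ⟨h1, h2, _⟩
    exact ⟨fun m => Finset.mem_Iic.2 (h1 m), fun a b hab => h2 a b hab b.2⟩
  · rintro ⟨h1, h2⟩
    refine ⟨fun m => Finset.mem_Iic.1 (h1 m), fun a b hab _ => h2 a b hab, ?_⟩
    intro a b ha _
    exact absurd a.2 (by omega)

def nxt (j : ℕ) (hj1 : 0 < j) (u : Fin j → ℕ) (s : ℕ) : ℕ :=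
  if s < j ∧ (s = 0 ∨ u ⟨min (s-1) (j-1), by omega⟩ ≤ u ⟨min s (j-1), by omega⟩)
  then s + 1 else s - 1

lemma up_mem {p : Fin n → ℕ} {j s : ℕ} {hj : j ≤ n} (hs : s < j) {u : Fin j → ℕ}
    (hu : u ∈ Fil p j hj s)
    (hcond : s = 0 ∨ u ⟨s-1, by omega⟩ ≤ u ⟨s, hs⟩) : u ∈ Fil p j hj (s+1) := by
  rw [mem_Fil] at hu ⊢
  obtain ⟨hD, hmono, hdec⟩ := hu
  refine ⟨hD, ?_, fun a b ha hab => hdec a b (by omega) hab⟩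
  intro a b hab hb
  rcases lt_or_ge (b : ℕ) s with hbs | hbs
  · exact hmono a b hab hbs
  · have hbs' : (b : ℕ) = s := by omega
    rcases Nat.lt_or_ge (a : ℕ) s with has | has
    · rcases hcond with h0 | hle
      · omega
      · calc u a ≤ u ⟨s-1, by omega⟩ := hmono a _ (by simp; omega) (by simp; omega)
          _ ≤ u ⟨s, hs⟩ := hle
          _ = u b := by congr 1; exact Fin.ext (by simp [hbs'])
    · have : a = b := Fin.ext (by omega)
      exact this ▸ le_refl _

lemma down_mem {p : Fin n → ℕ} {j s : ℕ} {hj : j ≤ n} (hs1 : 1 ≤ s) (hsj : s ≤ j)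
    {u : Fin j → ℕ} (hu : u ∈ Fil p j hj s)
    (hcond : ∀ h : s < j, u ⟨s, h⟩ < u ⟨s-1, by omega⟩) : u ∈ Fil p j hj (s-1) := by
  rw [mem_Fil] at hu ⊢
  obtain ⟨hD, hmono, hdec⟩ := hu
  refine ⟨hD, fun a b hab hb => hmono a b hab (by omega), ?_⟩
  intro a b ha hab
  rcases Nat.lt_or_ge (a : ℕ) s with has | has
  · have ha' : (a : ℕ) = s - 1 := by omega
    have hsj' : s < j := by have := b.2; omega
    have h1 : u ⟨s, hsj'⟩ < u a := by
      have := hcond hsj'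
      have ea : a = ⟨s-1, by omega⟩ := Fin.ext (by simp [ha'])
      rw [ea]; exact this
    rcases Nat.eq_or_lt_of_le (show s ≤ (b : ℕ) by omega) with hbs | hbs
    · have eb : b = ⟨s, hsj'⟩ := Fin.ext (by simp [← hbs])
      rw [eb]; exact h1
    · exact lt_trans (hdec ⟨s, hsj'⟩ b (by simp) (by simpa using hbs)) h1
  · exact hdec a b has hab

lemma nxt_good {p : Fin n → ℕ} {j s : ℕ} {hj : j ≤ n} (hj1 : 0 < j) (hs : s ≤ j)
    {u : Fin j → ℕ} (hu : u ∈ Fil p j hj s) :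
    (u ∈ Fil p j hj (nxt j hj1 u s)) ∧
      ((nxt j hj1 u s = s + 1 ∧ s < j) ∨ (nxt j hj1 u s = s - 1 ∧ 1 ≤ s)) := by
  by_cases hC : s < j ∧ (s = 0 ∨ u ⟨min (s-1) (j-1), by omega⟩ ≤ u ⟨min s (j-1), by omega⟩)
  · have hval : nxt j hj1 u s = s + 1 := if_pos hC
    obtain ⟨hsj, hC2⟩ := hC
    have e1 : (⟨min (s-1) (j-1), by omega⟩ : Fin j) = ⟨s-1, by omega⟩ :=
      Fin.ext (by simp; omega)
    have e2 : (⟨min s (j-1), by omega⟩ : Fin j) = ⟨s, hsj⟩ :=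
      Fin.ext (by simp; omega)
    rw [e1, e2] at hC2
    rw [hval]
    exact ⟨up_mem hsj hu hC2, Or.inl ⟨rfl, hsj⟩⟩
  · have hs1 : 1 ≤ s := by
      by_contra h
      have hs0 : s = 0 := by omega
      exact hC ⟨by omega, Or.inl hs0⟩
    have hval : nxt j hj1 u s = s - 1 := if_neg hC
    have hcond : ∀ h : s < j, u ⟨s, h⟩ < u ⟨s-1, by omega⟩ := by
      intro h
      by_contra hle
      push_neg at hle
      refine hC ⟨h, Or.inr ?_⟩
      have e1 : (⟨min (s-1) (j-1), by omega⟩ : Fin j) = ⟨s-1, by omega⟩ :=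
        Fin.ext (by simp; omega)
      have e2 : (⟨min s (j-1), by omega⟩ : Fin j) = ⟨s, h⟩ :=
        Fin.ext (by simp; omega)
      rw [e1, e2]
      exact hle
    rw [hval]
    exact ⟨down_mem hs1 hs hu hcond, Or.inr ⟨rfl, hs1⟩⟩

lemma nxt_nxt {p : Fin n → ℕ} {j s : ℕ} {hj : j ≤ n} (hj1 : 0 < j) (hs : s ≤ j)
    {u : Fin j → ℕ} (hu : u ∈ Fil p j hj s) :
    nxt j hj1 u (nxt j hj1 u s) = s := by
  have hdec := (mem_Fil.1 hu).2.2
  have hmono := (mem_Fil.1 hu).2.1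
  by_cases hC : s < j ∧ (s = 0 ∨ u ⟨min (s-1) (j-1), by omega⟩ ≤ u ⟨min s (j-1), by omega⟩)
  · have hval : nxt j hj1 u s = s + 1 := if_pos hC
    have hsj := hC.1
    rw [hval, nxt]
    rw [if_neg]
    · omega
    · rintro ⟨h1, h2⟩
      rcases h2 with h0 | hle
      · omega
      · have e1 : (⟨min (s+1-1) (j-1), by omega⟩ : Fin j) = ⟨s, hsj⟩ :=
          Fin.ext (by simp; omega)
        have e2 : (⟨min (s+1) (j-1), by omega⟩ : Fin j) = ⟨s+1, h1⟩ :=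
          Fin.ext (by simp; omega)
        rw [e1, e2] at hle
        exact absurd hle (not_le.2 (hdec ⟨s, hsj⟩ ⟨s+1, h1⟩ (by simp) (by simp)))
  · have hs1 : 1 ≤ s := by
      by_contra h
      exact hC ⟨by omega, Or.inl (by omega)⟩
    have hval : nxt j hj1 u s = s - 1 := if_neg hC
    rw [hval, nxt, if_pos]
    · omega
    · refine ⟨by omega, ?_⟩
      rcases Nat.eq_or_lt_of_le hs1 with h1 | h2
      · exact Or.inl (by omega)
      · refine Or.inr ?_
        have hb : s - 1 < j := by omega
        exact hmono ⟨min (s-1-1) (j-1), by omega⟩ ⟨min (s-1) (j-1), by omega⟩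
          (show min (s-1-1) (j-1) ≤ min (s-1) (j-1) by omega)
          (show min (s-1) (j-1) < s by omega)

lemma signed_sum_zero (p : Fin n → ℕ) {j : ℕ} (hj : j ≤ n) (hj1 : 0 < j) :
    ∑ s ∈ Finset.range (j+1), (-1 : ℤ)^(j - s) * ((Fil p j hj s).card : ℤ) = 0 := by
  have step : ∀ s ∈ Finset.range (j+1),
      (-1 : ℤ)^(j - s) * ((Fil p j hj s).card : ℤ) = ∑ _u ∈ Fil p j hj s, (-1 : ℤ)^(j - s) := by
    intro s _
    rw [Finset.sum_const, nsmul_eq_mul, mul_comm]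
  rw [Finset.sum_congr rfl step, ← Finset.sum_sigma (Finset.range (j+1)) (fun s => Fil p j hj s)
    (fun x => (-1 : ℤ)^(j - x.1))]
  refine Finset.sum_involution (fun x hx => ⟨nxt j hj1 x.2 x.1, x.2⟩) ?_ ?_ ?_ ?_
  · rintro ⟨s, u⟩ hx
    obtain ⟨hs, hu⟩ := Finset.mem_sigma.1 hx
    replace hu : u ∈ Fil p j hj s := hu
    have hs' : s ≤ j := Nat.lt_succ_iff.1 (Finset.mem_range.1 hs)
    show (-1 : ℤ)^(j - s) + (-1 : ℤ)^(j - nxt j hj1 u s) = 0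
    rcases (nxt_good hj1 hs' hu).2 with ⟨he, hlt⟩ | ⟨he, hge⟩
    · rw [he]
      have : j - s = (j - (s+1)) + 1 := by omega
      rw [this, pow_succ]
      ring
    · rw [he]
      have : j - (s - 1) = (j - s) + 1 := by omega
      rw [this, pow_succ]
      ring
  · rintro ⟨s, u⟩ hx _
    obtain ⟨hs, hu⟩ := Finset.mem_sigma.1 hx
    replace hu : u ∈ Fil p j hj s := hu
    have hs' : s ≤ j := Nat.lt_succ_iff.1 (Finset.mem_range.1 hs)
    intro h
    have h1 : nxt j hj1 u s = s := congrArg Sigma.fst h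
    rcases (nxt_good hj1 hs' hu).2 with ⟨he, _⟩ | ⟨he, hge⟩ <;> omega
  · rintro ⟨s, u⟩ hx
    obtain ⟨hs, hu⟩ := Finset.mem_sigma.1 hx
    replace hu : u ∈ Fil p j hj s := hu
    have hs' : s ≤ j := Nat.lt_succ_iff.1 (Finset.mem_range.1 hs)
    obtain ⟨hmem, hcases⟩ := nxt_good hj1 hs' hu
    have hlt' : nxt j hj1 u s < j + 1 := by
      rcases hcases with ⟨he, hlt⟩ | ⟨he, hge⟩ <;> omega
    exact Finset.mem_sigma.2 ⟨Finset.mem_range.2 hlt', hmem⟩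
  · rintro ⟨s, u⟩ hx
    obtain ⟨hs, hu⟩ := Finset.mem_sigma.1 hx
    replace hu : u ∈ Fil p j hj s := hu
    have hs' : s ≤ j := Nat.lt_succ_iff.1 (Finset.mem_range.1 hs)
    exact Sigma.ext (nxt_nxt hj1 hs' hu) HEq.rfl

lemma card_Fil_lt (p : Fin n → ℕ) (hp : Monotone p) {j : ℕ} (hj : j ≤ n) {s : ℕ} (hs : s < j) :
    (Fil p j hj s).card = (p ⟨s, lt_of_lt_of_le hs hj⟩ + 1).choose (j - s) * prefLP n p s := by
  have hsn : s < n := lt_of_lt_of_le hs hj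
  have hsn' : s ≤ n := hsn.le
  set A : Finset (Fin s → ℕ) :=
    (Fintype.piFinset fun m : Fin s => Finset.Iic (p ⟨m, m.2.trans_le hsn'⟩)).filter
      (fun q => ∀ a b : Fin s, a ≤ b → q a ≤ q b) with hAdef
  set B := Finset.powersetCard (j - s) (Finset.Iic (p ⟨s, hsn⟩)) with hBdef
  have key : (Fil p j hj s).card = (A ×ˢ B).card := by
    refine Finset.card_bij'
      (fun u _ => ((fun a : Fin s => u ⟨a, a.2.trans hs⟩),
        Finset.image (fun t : Fin (j - s) => u ⟨s + t, by have := t.2; omega⟩) Finset.univ))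
      (fun b hb => fun m : Fin j => if h : (m : ℕ) < s then b.1 ⟨m, h⟩
        else b.2.orderEmbOfFin (Finset.mem_powersetCard.1 (Finset.mem_product.1 hb).2).2
          ⟨j - 1 - m, by have := m.2; omega⟩)
      ?_ ?_ ?_ ?_
    · -- forward membership
      intro u hu
      rw [mem_Fil] at hu
      obtain ⟨hD, hmono, hdec⟩ := hu
      refine Finset.mem_product.2 ⟨?_, ?_⟩
      · rw [hAdef, Finset.mem_filter, Fintype.mem_piFinset]
        constructor
        · intro a
          exact Finset.mem_Iic.2 (hD ⟨a, a.2.trans hs⟩)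
        · intro a b hab
          exact hmono ⟨a, a.2.trans hs⟩ ⟨b, b.2.trans hs⟩ hab b.2
      · rw [hBdef, Finset.mem_powersetCard]
        constructor
        · intro x hx
          obtain ⟨t, -, rfl⟩ := Finset.mem_image.1 hx
          refine Finset.mem_Iic.2 (le_trans ?_ (hD ⟨s, hs⟩))
          rcases Nat.eq_zero_or_pos t.1 with h0 | hpos
          · exact le_of_eq (congrArg u (Fin.ext (by simp [h0])))
          · exact (hdec ⟨s, hs⟩ ⟨s + t, by have := t.2; omega⟩ (le_refl s) (by simpa using hpos)).le
        · have hinj : Function.Injective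
              (fun t : Fin (j - s) => u ⟨s + t, by have := t.2; omega⟩) := by
            intro t1 t2 h
            dsimp only at h
            by_contra hne
            rcases lt_or_gt_of_ne (fun e => hne (Fin.ext e) : (t1 : ℕ) ≠ (t2 : ℕ)) with hlt | hgt
            · have := hdec ⟨s + t1, by have := t1.2; omega⟩ ⟨s + t2, by have := t2.2; omega⟩
                (by simp) (by simpa using hlt)
              omega
            · have := hdec ⟨s + t2, by have := t2.2; omega⟩ ⟨s + t1, by have := t1.2; omega⟩
                (by simp) (by simpa using hgt)
              omega
          rw [Finset.card_image_of_injective _ hinj, Finset.card_univ, Fintype.card_fin]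
    · -- backward membership
      intro b hb
      have hA : b.1 ∈ A := (Finset.mem_product.1 hb).1
      have hBm : b.2 ∈ B := (Finset.mem_product.1 hb).2
      rw [hAdef, Finset.mem_filter, Fintype.mem_piFinset] at hA
      obtain ⟨hq_pi, hq_mono⟩ := hA
      rw [hBdef, Finset.mem_powersetCard] at hBm
      obtain ⟨hSsub, hScard⟩ := hBm
      rw [mem_Fil]
      refine ⟨?_, ?_, ?_⟩
      · intro m
        split
        · next h => exact Finset.mem_Iic.1 (hq_pi ⟨m, h⟩)
        · next h =>
          refine le_trans (Finset.mem_Iic.1 (hSsub (Finset.orderEmbOfFin_mem _ _ _))) ?_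
          exact hp (Fin.mk_le_mk.2 (by omega))
      · intro a b' hab hb'
        rw [dif_pos (lt_of_le_of_lt hab hb'), dif_pos hb']
        exact hq_mono ⟨a, lt_of_le_of_lt hab hb'⟩ ⟨b', hb'⟩ hab
      · intro a b' ha hab
        have hbj := b'.2
        rw [dif_neg (by omega), dif_neg (by omega)]
        exact (Finset.orderEmbOfFin _ _).strictMono (Fin.mk_lt_mk.2 (by omega))
    · -- left inverse
      intro u hu
      rw [mem_Fil] at hu
      obtain ⟨hD, hmono, hdec⟩ := hu
      funext m
      dsimp only
      split
      · next h => exact congrArg u (Fin.ext rfl)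
      · next h =>
        have hm := m.2
        have hms : s ≤ (m : ℕ) := not_lt.1 h
        have hf_mem : ∀ x : Fin (j - s),
            u ⟨j - 1 - x, by have := x.2; omega⟩ ∈
              Finset.image (fun t : Fin (j - s) => u ⟨s + t, by have := t.2; omega⟩)
                Finset.univ := by
          intro x
          refine Finset.mem_image.2 ⟨⟨j - 1 - x - s, by have := x.2; omega⟩, Finset.mem_univ _, ?_⟩
          exact congrArg u (Fin.ext (by simp; omega))
        have hf_mono : StrictMono
            (fun x : Fin (j - s) => u ⟨j - 1 - x, by have := x.2; omega⟩) := by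
          intro t t' hlt
          have hlt' : (t : ℕ) < t' := hlt
          have ht2 := t.2
          have ht2' := t'.2
          exact hdec ⟨j - 1 - t', by omega⟩ ⟨j - 1 - t, by omega⟩ (by simp; omega)
            (by simp; omega)
        rw [← Finset.orderEmbOfFin_unique _ hf_mem hf_mono]
        exact congrArg u (Fin.ext (by simp; omega))
    · -- right inverse
      intro b hb
      have hA : b.1 ∈ A := (Finset.mem_product.1 hb).1
      have hScard : b.2.card = j - s :=
        (Finset.mem_powersetCard.1 (Finset.mem_product.1 hb).2).2
      refine Prod.ext ?_ ?_
      · funext a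
        dsimp only
        rw [dif_pos a.2]
      · dsimp only
        ext x
        simp only [Finset.mem_image, Finset.mem_univ, true_and]
        constructor
        · rintro ⟨t, ht⟩
          rw [dif_neg (show ¬ s + (t : ℕ) < s by omega)] at ht
          rw [← ht]
          exact Finset.orderEmbOfFin_mem _ _ _
        · intro hx
          have hxr : x ∈ Set.range (b.2.orderEmbOfFin hScard) := by
            rw [Finset.range_orderEmbOfFin]
            exact hx
          obtain ⟨y, hy⟩ := hxr
          have hy2 := y.2
          refine ⟨⟨j - s - 1 - y, by omega⟩, ?_⟩
          rw [dif_neg (show ¬ s + (j - s - 1 - (y:ℕ)) < s by omega)]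
          have : (⟨j - 1 - (s + (j - s - 1 - y)), by omega⟩ : Fin (j - s)) = y :=
            Fin.ext (by simp; omega)
          rw [this]
          exact hy
  rw [key, Finset.card_product, ← prefLP_eq p hsn', hBdef, Finset.card_powersetCard,
    Nat.card_Iic, mul_comm]

end LP19

/-- The triangular system: for `0 ≤ j ≤ n`,
`∑_{i=1}^{j+1} (-1)^{j-i+1} C(p_i + 1, j-i+1) LP((p_1,...,p_i-1))` equals `[j = 0]`. -/
theorem stmt_19 (n : ℕ) (p : Fin n → ℕ) (hp : Monotone p) (j : ℕ) (hj : j ≤ n) :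
    ∑ i ∈ Finset.Icc 1 (j + 1),
        (-1 : ℤ) ^ (j + 1 - i) *
          ((if h : i - 1 < n then p ⟨i - 1, h⟩ else 0) + 1).choose (j + 1 - i) *
          prefLP n p (i - 1)
      = if j = 0 then 1 else 0 := by
  rcases Nat.eq_zero_or_pos j with rfl | hj1
  · rw [if_pos rfl, Finset.Icc_self, Finset.sum_singleton]
    norm_num [LP19.prefLP_zero]
  · rw [if_neg (by omega)]
    have himg : Finset.Icc 1 (j + 1) = Finset.image (· + 1) (Finset.range (j + 1)) := by
      ext x
      simp only [Finset.mem_Icc, Finset.mem_image, Finset.mem_range]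
      constructor
      · intro hx; exact ⟨x - 1, by omega, by omega⟩
      · rintro ⟨a, ha, rfl⟩; omega
    rw [himg, Finset.sum_image (by intro a _ b _ h; simp only at h; omega)]
    have hterm : ∀ s ∈ Finset.range (j + 1),
        (-1 : ℤ) ^ (j + 1 - (s + 1)) *
          ((if h : s + 1 - 1 < n then p ⟨s + 1 - 1, h⟩ else 0) + 1).choose (j + 1 - (s + 1)) *
          prefLP n p (s + 1 - 1)
        = (-1 : ℤ) ^ (j - s) * ((LP19.Fil p j hj s).card : ℤ) := by
      intro s hs
      have hs' : s ≤ j := Nat.lt_succ_iff.1 (Finset.mem_range.1 hs)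
      have e1 : j + 1 - (s + 1) = j - s := by omega
      have e2 : s + 1 - 1 = s := by omega
      simp only [e1, e2]
      rcases Nat.lt_or_ge s j with hlt | hge
      · have hsn : s < n := lt_of_lt_of_le hlt hj
        rw [dif_pos hsn, LP19.card_Fil_lt p hp hj hlt]
        push_cast
        ring
      · have hsj : s = j := by omega
        subst hsj
        rw [Nat.sub_self, LP19.card_Fil_top p hj]
        simp
    rw [Finset.sum_congr rfl hterm]
    exact LP19.signed_sum_zero p hj hj1
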